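/- Let G be a chordal graph (every cycle of length > 3 has a chord) on the vertex set [n] = {1,...,n} without loops, multiple edges, or isolated vertices. Then the clique complex Δ(G) is a quasi-forest. -/

import Mathlib

set_option maxHeartbeats 1000000
set_option synthInstance.maxHeartbeats 400000

open MvPolynomial

/-- A simple graph is chordal if every cycle of length > 3 has a chord, i.e. an edge of the
graph joining two vertices of the cycle which is not an edge of the cycle. -/
def SimpleGraph.IsChordal {V : Type*} (G : SimpleGraph V) : Prop :=
  ∀ (v : V) (c : G.Walk v v), c.IsCycle → 3 < c.length →
    ∃ u w, u ∈ c.support ∧ w ∈ c.support ∧ G.Adj u w ∧ s(u, w) ∉ c.edges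

/-- `F` is a facet of the clique complex `Δ(G)`, i.e. a maximal clique of `G`. -/
def SimpleGraph.IsFacet {V : Type*} (G : SimpleGraph V) (F : Finset V) : Prop :=
  G.IsClique (F : Set V) ∧ ∀ F' : Finset V, G.IsClique (F' : Set V) → F ⊆ F' → F' = F

/-- `v` is a free vertex of the facet `F` of `Δ(G)`: it belongs to no other facet. -/
def SimpleGraph.IsFreeVertex {V : Type*} (G : SimpleGraph V) (F : Finset V) (v : V) : Prop :=
  v ∈ F ∧ ∀ F' : Finset V, G.IsFacet F' → v ∈ F' → F' = F

/-- `F` is a facet of `Δ(G)` admitting a free vertex. -/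
def SimpleGraph.IsFreeFacet {V : Type*} (G : SimpleGraph V) (F : Finset V) : Prop :=
  G.IsFacet F ∧ ∃ v, G.IsFreeVertex F v

/-- `F` is a leaf of the simplicial complex whose facets are the members of the list `fs`:
there is a branch `B ≠ F` among them such that `H ∩ F ⊆ B ∩ F` for all facets `H ≠ F`. -/
def IsLeafIn {V : Type*} [DecidableEq V] (fs : List (Finset V)) (F : Finset V) : Prop :=
  ∃ B ∈ fs, B ≠ F ∧ ∀ H ∈ fs, H ≠ F → H ∩ F ⊆ B ∩ F

/-- A simplicial complex, given by its set of facets, is a quasi-forest if its facets can be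
ordered `F_1, …, F_r` so that for each `i ≥ 2`, `F_i` is a leaf of the subcomplex
`⟨F_1, …, F_i⟩`. -/
def IsQuasiForest {V : Type*} [DecidableEq V] (facets : Set (Finset V)) : Prop :=
  ∃ L : List (Finset V), L.Nodup ∧ (∀ F, F ∈ L ↔ F ∈ facets) ∧
    ∀ (i : ℕ) (h : i < L.length), 0 < i → IsLeafIn (L.take (i + 1)) L[i]

set_option linter.unusedSectionVars false
set_option linter.unusedVariables false

namespace ChordalQF
open SimpleGraph
variable {V : Type*} [DecidableEq V] {G : SimpleGraph V}

lemma exists_min_measure {α : Sort*} (P : α → Prop) (f : α → ℕ) (h : ∃ a, P a) :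
    ∃ a, P a ∧ ∀ b, P b → f a ≤ f b := by
  classical
  have h2 : ∃ k, ∃ a, P a ∧ f a = k := by obtain ⟨a, ha⟩ := h; exact ⟨f a, a, ha, rfl⟩
  obtain ⟨a', ha', hk⟩ := Nat.find_spec h2
  exact ⟨a', ha', fun b hb => hk ▸ Nat.find_le ⟨b, hb, rfl⟩⟩

lemma two_le_length {x y : V} (w : G.Walk x y) (hne : x ≠ y) (hnadj : ¬ G.Adj x y) :
    2 ≤ w.length := by
  match w with
  | .nil => exact absurd rfl hne
  | .cons h .nil => exact absurd h hnadj
  | .cons _ (.cons _ w') => simp only [Walk.length_cons]; omega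

lemma adj_of_support_pair {a b : V} (w : G.Walk a b) (hne : a ≠ b)
    (hsup : ∀ z ∈ w.support, z = a ∨ z = b) : G.Adj a b := by
  cases w with
  | nil => exact absurd rfl hne
  | @cons _ c _ h p =>
    have hc : c ∈ (Walk.cons h p).support := by simp [Walk.support_cons, p.start_mem_support]
    rcases hsup c hc with h1 | h1
    · exact absurd h1.symm h.ne
    · exact h1 ▸ h

lemma shortcut {x y : V} (p : G.Walk x y) (u w : V) (hu : u ∈ p.support) (hw : w ∈ p.support)
    (huw : G.Adj u w) (hne : s(u, w) ∉ p.edges) :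
    ∃ q : G.Walk x y, q.length < p.length ∧ ∀ z ∈ q.support, z ∈ p.support := by
  induction p with
  | nil =>
    simp only [Walk.support_nil, List.mem_singleton] at hu hw
    exact absurd (hu.trans hw.symm) huw.ne
  | @cons x c y h p ih =>
    simp only [Walk.support_cons, List.mem_cons] at hu hw
    have base : ∀ (u' w' : V), u' = x → w' ∈ p.support → G.Adj u' w' → s(u', w') ∉ (Walk.cons h p).edges →
        ∃ q : G.Walk x y, q.length < (Walk.cons h p).length ∧ ∀ z ∈ q.support, z ∈ (Walk.cons h p).support := by
      intro u' w' hu' hw' huw' hne'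
      subst hu'
      have hwc : w' ≠ c := by
        rintro rfl
        exact hne' (by simp [Walk.edges_cons])
      refine ⟨Walk.cons huw' (p.dropUntil w' hw'), ?_, ?_⟩
      · have hspec := congrArg Walk.length (p.take_spec hw')
        rw [Walk.length_append] at hspec
        have htk : (p.takeUntil w' hw').length ≠ 0 := fun h0 =>
          hwc (Walk.eq_of_length_eq_zero h0).symm
        simp only [Walk.length_cons]
        omega
      · intro z hz
        simp only [Walk.support_cons, List.mem_cons] at hz ⊢
        rcases hz with rfl | hz
        · exact Or.inl rfl
        · exact Or.inr (p.support_dropUntil_subset hw' hz)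
    rcases hu with rfl | hu
    · rcases hw with rfl | hw
      · exact absurd rfl huw.ne
      · exact base u w rfl hw huw hne
    · rcases hw with rfl | hw
      · rw [Sym2.eq_swap] at hne
        exact base w u rfl hu huw.symm hne
      · have hne2 : s(u, w) ∉ p.edges := fun hmem => hne (by simp [Walk.edges_cons, hmem])
        obtain ⟨q, hq1, hq2⟩ := ih hu hw hne2
        refine ⟨Walk.cons h q, by simp only [Walk.length_cons]; omega, ?_⟩
        intro z hz
        simp only [Walk.support_cons, List.mem_cons] at hz ⊢
        rcases hz with rfl | hz
        · exact Or.inl rfl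
        · exact Or.inr (hq2 z hz)


section Reach
variable (G)

/-- There is a walk from `x` to `y` inside `U` avoiding `S`. -/
def AWalk (U S : Finset V) (x y : V) : Prop :=
  ∃ w : G.Walk x y, (∀ z ∈ w.support, z ∈ U) ∧ ∀ z ∈ w.support, z ∉ S

/-- `x` is in the component of `r` in `U` minus `S`. -/
def Reach (U S : Finset V) (r x : V) : Prop := x ∈ U ∧ x ∉ S ∧ AWalk G U S x r

def SimpIn (U : Finset V) (v : V) : Prop :=
  v ∈ U ∧ ∀ x ∈ U, ∀ y ∈ U, G.Adj v x → G.Adj v y → x ≠ y → G.Adj x y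

end Reach

lemma reach_of_walk {U S : Finset V} {r x : V} (w : G.Walk x r)
    (hU : ∀ z ∈ w.support, z ∈ U) (hS : ∀ z ∈ w.support, z ∉ S) :
    ∀ z ∈ w.support, Reach G U S r z := by
  induction w with
  | nil =>
    intro z hz
    simp only [Walk.support_nil, List.mem_singleton] at hz
    subst hz
    exact ⟨hU z (by simp), hS z (by simp), Walk.nil, hU, hS⟩
  | @cons x c r h p ih =>
    intro z hz
    simp only [Walk.support_cons, List.mem_cons] at hz
    rcases hz with rfl | hz
    · exact ⟨hU z (by simp), hS z (by simp), Walk.cons h p, hU, hS⟩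
    · exact ih (fun z hz => hU z (by simp [hz])) (fun z hz => hS z (by simp [hz])) z hz

lemma reach_adj {U S : Finset V} {r x z : V} (hx : Reach G U S r x) (hadj : G.Adj z x)
    (hzU : z ∈ U) (hzS : z ∉ S) : Reach G U S r z := by
  obtain ⟨hxU, hxS, w, hU, hS⟩ := hx
  refine ⟨hzU, hzS, Walk.cons hadj w, ?_, ?_⟩ <;>
  · intro t ht
    simp only [Walk.support_cons, List.mem_cons] at ht
    rcases ht with rfl | ht
    · first | exact hzU | exact hzS
    · first | exact hU t ht | exact hS t ht

lemma reach_disj {U S : Finset V} {a b : V} (hsep : ¬ AWalk G U S a b) {z : V}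
    (h1 : Reach G U S a z) (h2 : Reach G U S b z) : False := by
  obtain ⟨_, _, w1, hU1, hS1⟩ := h1
  obtain ⟨_, _, w2, hU2, hS2⟩ := h2
  refine hsep ⟨w1.reverse.append w2, ?_, ?_⟩ <;>
  · intro t ht
    rw [Walk.mem_support_append_iff, Walk.support_reverse, List.mem_reverse] at ht
    rcases ht with ht | ht
    · first | exact hU1 t ht | exact hS1 t ht
    · first | exact hU2 t ht | exact hS2 t ht

/-- If a walk from `r` avoiding `S.erase x` passes through `x ∈ S`, then `x` has a neighbour in
the component of `r`. -/
lemma exists_nbhd {U S : Finset V} {x r t : V} (hr : r ∉ S) (hx : x ∈ S)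
    (w : G.Walk r t) (hxw : x ∈ w.support) (hU : ∀ z ∈ w.support, z ∈ U)
    (hS : ∀ z ∈ w.support, z ∉ S.erase x) :
    ∃ u, G.Adj x u ∧ Reach G U S r u := by
  set tk := w.takeUntil x hxw with htk
  have hxr : x ≠ r := fun h => hr (h ▸ hx)
  obtain ⟨u, hadj, t', hcons⟩ := Walk.exists_eq_cons_of_ne hxr tk.reverse
  have hsuprev : tk.reverse.support = x :: t'.support := by rw [hcons, Walk.support_cons]
  have hcount : tk.support.count x = 1 := w.count_support_takeUntil_eq_one hxw
  have hxnot : x ∉ t'.support := by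
    have : tk.support.reverse.count x = 1 := by rwa [List.count_reverse]
    rw [← Walk.support_reverse, hsuprev, List.count_cons_self] at this
    exact List.count_eq_zero.mp (by omega)
  have hsub : ∀ z ∈ t'.support, z ∈ w.support := by
    intro z hz
    have : z ∈ tk.reverse.support := by rw [hsuprev]; simp [hz]
    rw [Walk.support_reverse, List.mem_reverse] at this
    exact w.support_takeUntil_subset hxw this
  have hSall : ∀ z ∈ t'.support, z ∉ S := by
    intro z hz hzS
    have hzx : z ≠ x := fun h => hxnot (h ▸ hz)
    exact hS z (hsub z hz) (Finset.mem_erase.mpr ⟨hzx, hzS⟩)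
  exact ⟨u, hadj, reach_of_walk t' (fun z hz => hU z (hsub z hz)) hSall u t'.start_mem_support⟩


/-- A minimal separator in a chordal graph is a clique. -/
lemma sep_clique (hch : G.IsChordal) {U S : Finset V} {a b : V}
    (hSU : S ⊆ U) (ha : a ∉ S) (hb : b ∉ S)
    (hsep : ¬ AWalk G U S a b)
    (hmin : ∀ x ∈ S, AWalk G U (S.erase x) a b)
    {x y : V} (hx : x ∈ S) (hy : y ∈ S) (hxy : x ≠ y) : G.Adj x y := by
  by_contra hnadj
  -- neighbours of x and y in both components
  have nbhd : ∀ z ∈ S, (∃ u, G.Adj z u ∧ Reach G U S a u) ∧ ∃ u, G.Adj z u ∧ Reach G U S b u := by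
    intro z hz
    obtain ⟨w, hwU, hwS⟩ := hmin z hz
    have hzw : z ∈ w.support := by
      by_contra hzw
      refine hsep ⟨w, hwU, fun t ht hts => ?_⟩
      have : t ≠ z := fun h => hzw (h ▸ ht)
      exact hwS t ht (Finset.mem_erase.mpr ⟨this, hts⟩)
    constructor
    · exact exists_nbhd ha hz w hzw hwU hwS
    · refine exists_nbhd hb hz w.reverse ?_ ?_ ?_ <;>
        simp only [Walk.support_reverse, List.mem_reverse]
      · exact hzw
      · exact hwU
      · exact hwS
  obtain ⟨⟨ux, hux, hrux⟩, ⟨vx, hvx, hrvx⟩⟩ := nbhd x hx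
  obtain ⟨⟨uy, huy, hruy⟩, ⟨vy, hvy, hrvy⟩⟩ := nbhd y hy
  -- the class of x-y walks with interior in the a-component (resp. b-component)
  have build : ∀ (r : V) (x' y' : V) (ux' uy' : V), x' ∈ U → y' ∈ U →
      G.Adj x' ux' → Reach G U S r ux' → G.Adj y' uy' → Reach G U S r uy' →
      ∃ p : G.Walk x' y', (∀ z ∈ p.support, z ∈ U) ∧
        ∀ z ∈ p.support, z ≠ x' → z ≠ y' → Reach G U S r z := by
    intro r x' y' ux' uy' hx'U hy'U hadjx hrx hadjy hry
    obtain ⟨hux'U, hux'S, w1, hU1, hS1⟩ := hrx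
    obtain ⟨huy'U, huy'S, w2, hU2, hS2⟩ := hry
    refine ⟨Walk.cons hadjx ((w1.append w2.reverse).concat hadjy.symm), ?_, ?_⟩
    · intro z hz
      simp only [Walk.support_cons, Walk.support_concat, List.concat_eq_append, List.mem_append, List.mem_cons, List.mem_singleton,
        Walk.mem_support_append_iff, Walk.support_reverse, List.mem_reverse] at hz
      rcases hz with rfl | (hz | hz) | (rfl | h)
      · exact hx'U
      · exact hU1 z hz
      · exact hU2 z hz
      · exact hy'U
      · exact absurd h List.not_mem_nil
    · intro z hz hzx hzy
      simp only [Walk.support_cons, Walk.support_concat, List.concat_eq_append, List.mem_append, List.mem_cons, List.mem_singleton,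
        Walk.mem_support_append_iff, Walk.support_reverse, List.mem_reverse] at hz
      rcases hz with rfl | (hz | hz) | (rfl | h)
      · exact absurd rfl hzx
      · exact reach_of_walk w1 hU1 hS1 z hz
      · exact reach_of_walk w2 hU2 hS2 z hz
      · exact absurd rfl hzy
      · exact absurd h List.not_mem_nil
  -- minimal such paths
  have getmin : ∀ (r : V) (x' y' : V), x' ≠ y' → ¬ G.Adj x' y' →
      (∃ p : G.Walk x' y', (∀ z ∈ p.support, z ∈ U) ∧
        ∀ z ∈ p.support, z ≠ x' → z ≠ y' → Reach G U S r z) →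
      ∃ p : G.Walk x' y', p.IsPath ∧ 2 ≤ p.length ∧ (∀ z ∈ p.support, z ∈ U) ∧
        (∀ z ∈ p.support, z ≠ x' → z ≠ y' → Reach G U S r z) ∧
        ∀ u w, u ∈ p.support → w ∈ p.support → G.Adj u w → s(u, w) ∈ p.edges := by
    intro r x' y' hne hnadj' hex
    set P : G.Walk x' y' → Prop := fun p => (∀ z ∈ p.support, z ∈ U) ∧
        ∀ z ∈ p.support, z ≠ x' → z ≠ y' → Reach G U S r z with hP
    obtain ⟨p0, hp0, hmin0⟩ := exists_min_measure P Walk.length hex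
    have hPby : P p0.bypass := by
      refine ⟨fun z hz => hp0.1 z (p0.support_bypass_subset hz),
        fun z hz => hp0.2 z (p0.support_bypass_subset hz)⟩
    have hminby : ∀ q, P q → p0.bypass.length ≤ q.length := fun q hq =>
      le_trans p0.length_bypass_le (hmin0 q hq)
    refine ⟨p0.bypass, p0.bypass_isPath, two_le_length _ hne hnadj', hPby.1, hPby.2, ?_⟩
    intro u w hu hw hadj
    by_contra hne'
    obtain ⟨q, hql, hqsup⟩ := shortcut p0.bypass u w hu hw hadj hne'
    have hPq : P q := ⟨fun z hz => hPby.1 z (hqsup z hz), fun z hz => hPby.2 z (hqsup z hz)⟩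
    exact absurd (hminby q hPq) (by omega)
  obtain ⟨p, hppath, hplen, hpU, hpA, hpchord⟩ :=
    getmin a x y hxy hnadj (build a x y ux uy (hSU hx) (hSU hy) hux hrux huy hruy)
  obtain ⟨q, hqpath, hqlen, hqU, hqB, hqchord⟩ :=
    getmin b y x (Ne.symm hxy) (fun h => hnadj h.symm)
      (build b y x vy vx (hSU hy) (hSU hx) hvy hrvy hvx hrvx)
  -- supports meet only in x and y
  have hmeet : ∀ z, z ∈ p.support → z ∈ q.support → z = x ∨ z = y := by
    intro z hzp hzq
    by_contra hcon
    push_neg at hcon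
    exact reach_disj hsep (hpA z hzp hcon.1 hcon.2) (hqB z hzq hcon.2 hcon.1)
  -- the cycle
  set c : G.Walk x x := p.append q with hc
  have hcedges : c.edges = p.edges ++ q.edges := Walk.edges_append p q
  have hedisj : ∀ e ∈ p.edges, e ∉ q.edges := by
    intro e hep heq
    induction e with
    | h z1 z2 =>
      have hz1 : z1 = x ∨ z1 = y :=
        hmeet z1 (p.fst_mem_support_of_mem_edges hep) (q.fst_mem_support_of_mem_edges heq)
      have hz2 : z2 = x ∨ z2 = y :=
        hmeet z2 (p.snd_mem_support_of_mem_edges hep) (q.snd_mem_support_of_mem_edges heq)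
      have hadj : G.Adj z1 z2 := p.adj_of_mem_edges hep
      rcases hz1 with rfl | rfl <;> rcases hz2 with rfl | rfl
      · exact absurd rfl hadj.ne
      · exact hnadj hadj
      · exact hnadj hadj.symm
      · exact absurd rfl hadj.ne
  have hcyc : c.IsCycle := by
    rw [Walk.isCycle_def]
    refine ⟨⟨?_⟩, ?_, ?_⟩
    · rw [hcedges]
      exact List.Nodup.append hppath.isTrail.edges_nodup hqpath.isTrail.edges_nodup hedisj
    · intro hnil
      have : c.length = 0 := by rw [hnil]; rfl
      rw [hc, Walk.length_append] at this
      omega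
    · rw [hc, Walk.tail_support_append]
      have hpn : p.support.tail.Nodup := hppath.support_nodup.sublist (List.tail_sublist _)
      have hqn : q.support.tail.Nodup := hqpath.support_nodup.sublist (List.tail_sublist _)
      refine List.Nodup.append hpn hqn ?_
      intro z hzp hzq
      have h1 : z ∈ p.support := List.mem_of_mem_tail hzp
      have h2 : z ∈ q.support := List.mem_of_mem_tail hzq
      rcases hmeet z h1 h2 with rfl | rfl
      · have := hppath.support_nodup
        rw [p.support_eq_cons] at this
        exact (List.nodup_cons.mp this).1 hzp
      · have := hqpath.support_nodup
        rw [q.support_eq_cons] at this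
        exact (List.nodup_cons.mp this).1 hzq
  have hclen : 3 < c.length := by rw [hc, Walk.length_append]; omega
  obtain ⟨u, w, hus, hws, hadj, hnedge⟩ := hch x c hcyc hclen
  rw [hc, Walk.mem_support_append_iff] at hus hws
  have hbothp : ¬ (u ∈ p.support ∧ w ∈ p.support) := by
    rintro ⟨h1, h2⟩
    exact hnedge (by rw [hcedges]; exact List.mem_append_left _ (hpchord u w h1 h2 hadj))
  have hbothq : ¬ (u ∈ q.support ∧ w ∈ q.support) := by
    rintro ⟨h1, h2⟩
    exact hnedge (by rw [hcedges]; exact List.mem_append_right _ (hqchord u w h1 h2 hadj))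
  have hxp : x ∈ p.support := p.start_mem_support
  have hyp : y ∈ p.support := p.end_mem_support
  have hxq : x ∈ q.support := q.end_mem_support
  have hyq : y ∈ q.support := q.start_mem_support
  -- remaining case: one strictly inside p, the other strictly inside q
  have inner : ∀ u' w', u' ∈ p.support → w' ∈ q.support → u' ≠ x → u' ≠ y → w' ≠ x → w' ≠ y →
      G.Adj u' w' → False := by
    intro u' w' h1 h2 hn1 hn2 hn3 hn4 hadj'
    have hru : Reach G U S a u' := hpA u' h1 hn1 hn2
    have hrw : Reach G U S b w' := hqB w' h2 hn4 hn3
    exact reach_disj hsep hru (reach_adj hrw hadj' hru.1 hru.2.1)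
  rcases hus with hu | hu <;> rcases hws with hw | hw
  · exact hbothp ⟨hu, hw⟩
  · -- u in p, w in q
    by_cases hux' : u = x
    · exact hbothq ⟨hux' ▸ hxq, hw⟩
    by_cases huy' : u = y
    · exact hbothq ⟨huy' ▸ hyq, hw⟩
    by_cases hwx' : w = x
    · exact hbothp ⟨hu, hwx' ▸ hxp⟩
    by_cases hwy' : w = y
    · exact hbothp ⟨hu, hwy' ▸ hyp⟩
    exact inner u w hu hw hux' huy' hwx' hwy' hadj
  · by_cases hux' : u = x
    · exact hbothp ⟨hux' ▸ hxp, hw⟩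
    by_cases huy' : u = y
    · exact hbothp ⟨huy' ▸ hyp, hw⟩
    by_cases hwx' : w = x
    · exact hbothq ⟨hu, hwx' ▸ hxq⟩
    by_cases hwy' : w = y
    · exact hbothq ⟨hu, hwy' ▸ hyq⟩
    exact inner w u hw hu hwx' hwy' hux' huy' hadj.symm
  · exact hbothq ⟨hu, hw⟩


def DiracConcl (G : SimpleGraph V) (U : Finset V) : Prop :=
  (∀ x ∈ U, ∀ y ∈ U, x ≠ y → G.Adj x y) ∨
    ∃ a ∈ U, ∃ b ∈ U, ¬ G.Adj a b ∧ a ≠ b ∧ SimpIn G U a ∧ SimpIn G U b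

lemma reach_self {U S : Finset V} {a : V} (haU : a ∈ U) (ha : a ∉ S) : Reach G U S a a :=
  ⟨haU, ha, Walk.nil, by simp [haU], by simp [ha]⟩

/-- One side of the Dirac induction: a simplicial vertex in the `a`-component. -/
lemma side (hch : G.IsChordal) {N : ℕ}
    (ih : ∀ U : Finset V, U.card ≤ N → DiracConcl G U)
    {U S : Finset V} {a b : V} (hU : U.card ≤ N + 1) (haU : a ∈ U) (hbU : b ∈ U)
    (hSU : S ⊆ U) (ha : a ∉ S) (hb : b ∉ S) (hsep : ¬ AWalk G U S a b)
    (hmin : ∀ x ∈ S, AWalk G U (S.erase x) a b) :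
    ∃ s, Reach G U S a s ∧ SimpIn G U s := by
  classical
  set UA : Finset V := (U.filter fun z => Reach G U S a z) ∪ S with hUA
  have hUAsub : UA ⊆ U := by
    intro z hz
    rw [hUA, Finset.mem_union, Finset.mem_filter] at hz
    rcases hz with hz | hz
    · exact hz.1
    · exact hSU hz
  have hmemUA : ∀ z, z ∈ U → z ∉ S → Reach G U S a z → z ∈ UA := by
    intro z h1 h2 h3
    rw [hUA, Finset.mem_union, Finset.mem_filter]
    exact Or.inl ⟨h1, h3⟩
  have hSUA : ∀ z ∈ S, z ∈ UA := fun z hz => by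
    rw [hUA, Finset.mem_union]; exact Or.inr hz
  have hbUA : b ∉ UA := by
    intro hbua
    rw [hUA, Finset.mem_union, Finset.mem_filter] at hbua
    rcases hbua with hz | hz
    · obtain ⟨_, _, w, h1, h2⟩ := hz.2
      exact hsep ⟨w.reverse, by simpa [Walk.support_reverse] using h1,
        by simpa [Walk.support_reverse] using h2⟩
    · exact hb hz
  have hcard : UA.card ≤ N := by
    have : UA ⊂ U := ⟨hUAsub, fun h => hbUA (h hbU)⟩
    have := Finset.card_lt_card this
    omega
  -- vertices of UA off S reach a; their U-neighbours lie in UA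
  have hclose : ∀ z ∈ UA, z ∉ S → Reach G U S a z := by
    intro z hz hzs
    rw [hUA, Finset.mem_union, Finset.mem_filter] at hz
    rcases hz with hz | hz
    · exact hz.2
    · exact absurd hz hzs
  have hnbhdUA : ∀ z ∈ UA, z ∉ S → ∀ t ∈ U, G.Adj z t → t ∈ UA := by
    intro z hz hzs t htU hadj
    by_cases hts : t ∈ S
    · exact hSUA t hts
    · exact hmemUA t htU hts (reach_adj (hclose z hz hzs) hadj.symm htU hts)
  have key : ∀ z ∈ UA, z ∉ S → SimpIn G UA z → Reach G U S a z ∧ SimpIn G U z := by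
    intro z hz hzs hsimp
    refine ⟨hclose z hz hzs, hUAsub hz, ?_⟩
    intro x hxU y hyU hax hay hne
    exact hsimp.2 x (hnbhdUA z hz hzs x hxU hax) y (hnbhdUA z hz hzs y hyU hay) hax hay hne
  rcases ih UA hcard with hcl | ⟨x, hxUA, y, hyUA, hnadj, hne, hsx, hsy⟩
  · -- UA is a clique; a is simplicial in U
    have haUA : a ∈ UA := hmemUA a haU ha (reach_self haU ha)
    obtain ⟨h1, h2⟩ := key a haUA ha ⟨haUA, fun x hx y hy _ _ hne => hcl x hx y hy hne⟩
    exact ⟨a, h1, h2⟩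
  · -- not both simplicial vertices are in S
    have : x ∉ S ∨ y ∉ S := by
      by_contra hcon
      push_neg at hcon
      exact hnadj (sep_clique hch hSU ha hb hsep hmin hcon.1 hcon.2 hne)
    rcases this with hxs | hys
    · obtain ⟨h1, h2⟩ := key x hxUA hxs hsx
      exact ⟨x, h1, h2⟩
    · obtain ⟨h1, h2⟩ := key y hyUA hys hsy
      exact ⟨y, h1, h2⟩

lemma dirac (hch : G.IsChordal) :
    ∀ (N : ℕ) (U : Finset V), U.card ≤ N → DiracConcl G U := by
  intro N
  induction N with
  | zero =>
    intro U hU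
    left
    intro x hx
    have : U = ∅ := Finset.card_eq_zero.mp (Nat.le_zero.mp hU)
    simp [this] at hx
  | succ N ih =>
    intro U hU
    by_cases hcl : ∀ x ∈ U, ∀ y ∈ U, x ≠ y → G.Adj x y
    · exact Or.inl hcl
    push_neg at hcl
    obtain ⟨a, haU, b, hbU, hne, hnadj⟩ := hcl
    -- a minimal separator
    classical
    have hsep0 : ∃ S : Finset V, S ⊆ U ∧ a ∉ S ∧ b ∉ S ∧ ¬ AWalk G U S a b := by
      refine ⟨U \ {a, b}, Finset.sdiff_subset, by simp [haU], by simp [hbU], ?_⟩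
      rintro ⟨w, hwU, hwS⟩
      refine hnadj (adj_of_support_pair w hne fun z hz => ?_)
      have h1 := hwU z hz
      have h2 := hwS z hz
      rw [Finset.mem_sdiff] at h2
      push_neg at h2
      have := h2 h1
      simpa using this
    obtain ⟨S, ⟨hSU, haS, hbS, hsep⟩, hminS⟩ :=
      exists_min_measure (fun S : Finset V => S ⊆ U ∧ a ∉ S ∧ b ∉ S ∧ ¬ AWalk G U S a b)
        Finset.card hsep0
    have hmin : ∀ x ∈ S, AWalk G U (S.erase x) a b := by
      intro x hx
      by_contra hcon
      have := hminS (S.erase x) ⟨(S.erase_subset x).trans hSU, fun h => haS (S.erase_subset x h),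
        fun h => hbS (S.erase_subset x h), hcon⟩
      have := Finset.card_erase_of_mem hx
      have hpos : 0 < S.card := Finset.card_pos.mpr ⟨x, hx⟩
      omega
    have hsep' : ¬ AWalk G U S b a := by
      rintro ⟨w, h1, h2⟩
      exact hsep ⟨w.reverse, by simpa [Walk.support_reverse] using h1,
        by simpa [Walk.support_reverse] using h2⟩
    have hmin' : ∀ x ∈ S, AWalk G U (S.erase x) b a := by
      intro x hx
      obtain ⟨w, h1, h2⟩ := hmin x hx
      exact ⟨w.reverse, by simpa [Walk.support_reverse] using h1,
        by simpa [Walk.support_reverse] using h2⟩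
    obtain ⟨s, hsa, hss⟩ := side hch ih hU haU hbU hSU haS hbS hsep hmin
    obtain ⟨t, htb, hts⟩ := side hch ih hU hbU haU hSU hbS haS hsep' hmin'
    right
    refine ⟨s, hss.1, t, hts.1, ?_, ?_, hss, hts⟩
    · intro hadj
      exact reach_disj hsep (reach_adj hsa hadj.symm htb.1 htb.2.1) htb
    · rintro rfl
      exact reach_disj hsep hsa htb


def CliqueIn (G : SimpleGraph V) (U F : Finset V) : Prop := F ⊆ U ∧ G.IsClique (F : Set V)

def FacetIn (G : SimpleGraph V) (U F : Finset V) : Prop :=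
  CliqueIn G U F ∧ ∀ F', CliqueIn G U F' → F ⊆ F' → F' = F

lemma exists_facet_extend {U C : Finset V} (hC : CliqueIn G U C) :
    ∃ F, FacetIn G U F ∧ C ⊆ F := by
  obtain ⟨F, ⟨hF, hCF⟩, hmin⟩ := exists_min_measure
    (fun F : Finset V => CliqueIn G U F ∧ C ⊆ F) (fun F => U.card - F.card)
    ⟨C, hC, subset_rfl⟩
  refine ⟨F, ⟨hF, ?_⟩, hCF⟩
  intro F' hF' hsub
  have h1 := hmin F' ⟨hF', hCF.trans hsub⟩
  have h2 : F.card ≤ U.card := Finset.card_le_card hF.1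
  have h3 : F'.card ≤ U.card := Finset.card_le_card hF'.1
  have h4 : F.card ≤ F'.card := Finset.card_le_card hsub
  exact (Finset.eq_of_subset_of_card_le hsub (by omega)).symm ▸ rfl

lemma simp_facet {U : Finset V} {v : V} (hs : SimpIn G U v) :
    ∃ F : Finset V, v ∈ F ∧ FacetIn G U F ∧ ∀ C, CliqueIn G U C → v ∈ C → C ⊆ F := by
  classical
  set F : Finset V := insert v (U.filter fun z => G.Adj v z) with hFdef
  have hmax : ∀ C, CliqueIn G U C → v ∈ C → C ⊆ F := by
    intro C hC hvC z hz
    by_cases hzv : z = v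
    · subst hzv; exact Finset.mem_insert_self _ _
    · have hadj : G.Adj v z := hC.2 (Finset.mem_coe.mpr hvC) (Finset.mem_coe.mpr hz)
        (fun h => hzv h.symm)
      exact Finset.mem_insert_of_mem (Finset.mem_filter.mpr ⟨hC.1 hz, hadj⟩)
  have hcl : CliqueIn G U F := by
    constructor
    · exact Finset.insert_subset hs.1 (Finset.filter_subset _ _)
    · intro z hz z' hz' hne
      rw [Finset.mem_coe, hFdef, Finset.mem_insert, Finset.mem_filter] at hz hz'
      rcases hz with rfl | ⟨hzU, hzadj⟩
      · rcases hz' with rfl | ⟨hz'U, hz'adj⟩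
        · exact absurd rfl hne
        · exact hz'adj
      · rcases hz' with rfl | ⟨hz'U, hz'adj⟩
        · exact hzadj.symm
        · exact hs.2 z hzU z' hz'U hzadj hz'adj hne
  refine ⟨F, Finset.mem_insert_self _ _, ⟨hcl, ?_⟩, hmax⟩
  intro F' hF' hsub
  exact subset_antisymm (hmax F' hF' (hsub (Finset.mem_insert_self _ _))) hsub

lemma facet_drop {U : Finset V} {v : V} {H : Finset V} (hH : FacetIn G U H) (hv : v ∉ H) :
    FacetIn G (U.erase v) H := by
  refine ⟨⟨Finset.subset_erase.mpr ⟨hH.1.1, hv⟩, hH.1.2⟩, ?_⟩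
  intro C hC hsub
  exact hH.2 C ⟨hC.1.trans (U.erase_subset v), hC.2⟩ hsub

lemma facet_lift {U : Finset V} {v : V} {F : Finset V}
    (hvF : v ∈ F) (hF : FacetIn G U F) (hmax : ∀ C, CliqueIn G U C → v ∈ C → C ⊆ F)
    {H : Finset V} (hH : FacetIn G (U.erase v) H) :
    FacetIn G U H ∨ H = F.erase v := by
  by_cases hfac : FacetIn G U H
  · exact Or.inl hfac
  right
  have hHU : CliqueIn G U H := ⟨hH.1.1.trans (U.erase_subset v), hH.1.2⟩
  have hvH : v ∉ H := fun h => (Finset.mem_erase.mp (hH.1.1 h)).1 rfl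
  have : ¬ ∀ F', CliqueIn G U F' → H ⊆ F' → F' = H := fun h => hfac ⟨hHU, h⟩
  push_neg at this
  obtain ⟨C, hC, hHC, hCH⟩ := this
  have hvC : v ∈ C := by
    by_contra hvC
    exact hCH (hH.2 C ⟨Finset.subset_erase.mpr ⟨hC.1, hvC⟩, hC.2⟩ hHC)
  have hHF : H ⊆ F.erase v :=
    Finset.subset_erase.mpr ⟨hHC.trans (hmax C hC hvC), hvH⟩
  have hFe : CliqueIn G (U.erase v) (F.erase v) :=
    ⟨Finset.erase_subset_erase v hF.1.1, hF.1.2.subset (Finset.coe_subset.mpr (F.erase_subset v))⟩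
  exact (hH.2 (F.erase v) hFe hHF).symm

lemma phi_inj {v : V} {Fold H K : Finset V} (h1 : v ∉ H) (h2 : v ∉ K)
    (heq : (if H = Fold then insert v Fold else H) = (if K = Fold then insert v Fold else K)) :
    H = K := by
  by_cases hH : H = Fold <;> by_cases hK : K = Fold
  · exact hH.trans hK.symm
  · rw [if_pos hH, if_neg hK] at heq
    exact absurd (heq ▸ Finset.mem_insert_self v Fold) h2
  · rw [if_neg hH, if_pos hK] at heq
    exact absurd (heq.symm ▸ Finset.mem_insert_self v Fold) h1
  · rwa [if_neg hH, if_neg hK] at heq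

lemma phi_inter {v : V} {Fold H K : Finset V} (h1 : v ∉ H) (h2 : v ∉ K) (hne : H ≠ K) :
    (if H = Fold then insert v Fold else H) ∩ (if K = Fold then insert v Fold else K) = H ∩ K := by
  by_cases hH : H = Fold <;> by_cases hK : K = Fold
  · exact absurd (hH.trans hK.symm) hne
  · rw [if_pos hH, if_neg hK, ← hH, Finset.insert_inter_of_notMem h2]
  · rw [if_neg hH, if_pos hK, ← hK, Finset.inter_insert_of_notMem h1]
  · rw [if_neg hH, if_neg hK]

lemma isLeafIn_map {v : V} {Fold : Finset V} (fs : List (Finset V))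
    (hv : ∀ H ∈ fs, v ∉ H) {X : Finset V} (hvX : v ∉ X) (h : IsLeafIn fs X) :
    IsLeafIn (fs.map fun H => if H = Fold then insert v Fold else H)
      (if X = Fold then insert v Fold else X) := by
  obtain ⟨B, hBfs, hBX, hall⟩ := h
  refine ⟨if B = Fold then insert v Fold else B, List.mem_map_of_mem hBfs, ?_, ?_⟩
  · intro heq; exact hBX (phi_inj (hv B hBfs) hvX heq)
  · intro H' hH' hne'
    obtain ⟨H, hHfs, rfl⟩ := List.mem_map.mp hH'
    have hne2 : H ≠ X := fun h => hne' (h ▸ rfl)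
    rw [phi_inter (hv H hHfs) hvX hne2, phi_inter (hv B hBfs) hvX hBX]
    exact hall H hHfs hne2

lemma qf_empty : ∃ L : List (Finset V), L.Nodup ∧ (∀ F, F ∈ L ↔ FacetIn G ∅ F) ∧
    ∀ (i : ℕ) (h : i < L.length), 0 < i → IsLeafIn (L.take (i + 1)) L[i] := by
  refine ⟨[∅], List.nodup_singleton _, ?_, ?_⟩
  · intro F
    simp only [List.mem_singleton]
    constructor
    · rintro rfl
      exact ⟨⟨subset_rfl, by simp⟩, fun F' hF' _ => Finset.subset_empty.mp hF'.1⟩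
    · intro h
      exact Finset.subset_empty.mp h.1.1
  · intro i h hi
    simp only [List.length_singleton] at h
    omega

lemma qf (hch : G.IsChordal) :
    ∀ (N : ℕ) (U : Finset V), U.card ≤ N →
    ∃ L : List (Finset V), L.Nodup ∧ (∀ F, F ∈ L ↔ FacetIn G U F) ∧
      ∀ (i : ℕ) (h : i < L.length), 0 < i → IsLeafIn (L.take (i + 1)) L[i] := by
  intro N
  induction N with
  | zero =>
    intro U hU
    have : U = ∅ := Finset.card_eq_zero.mp (Nat.le_zero.mp hU)
    subst this
    exact qf_empty
  | succ N ih =>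
    intro U hU
    rcases Finset.eq_empty_or_nonempty U with rfl | hneU
    · exact qf_empty
    classical
    have hvex : ∃ v, SimpIn G U v := by
      rcases dirac hch U.card U le_rfl with hcl | ⟨a, haU, _, _, _, _, hsa, _⟩
      · obtain ⟨v, hvU⟩ := hneU
        exact ⟨v, hvU, fun x hx y hy _ _ hne' => hcl x hx y hy hne'⟩
      · exact ⟨a, hsa⟩
    obtain ⟨v, hvs⟩ := hvex
    have hvU : v ∈ U := hvs.1
    obtain ⟨F, hvF, hF, hmax⟩ := simp_facet hvs
    have hcard' : (U.erase v).card ≤ N := by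
      have h1 := Finset.card_erase_of_mem hvU
      have h2 : 0 < U.card := Finset.card_pos.mpr ⟨v, hvU⟩
      omega
    obtain ⟨L', hnd', hmem', hleaf'⟩ := ih (U.erase v) hcard'
    set Fold := F.erase v with hFolddef
    have hFoldF : insert v Fold = F := Finset.insert_erase hvF
    have hvFold : v ∉ Fold := Finset.notMem_erase _ _
    have hvL' : ∀ H ∈ L', v ∉ H := fun H hH hvH =>
      (Finset.mem_erase.mp (((hmem' H).mp hH).1.1 hvH)).1 rfl
    have huniq : ∀ H, FacetIn G U H → v ∈ H → H = F := by
      intro H hH hvH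
      exact (hH.2 F hF.1 (hmax H hH.1 hvH)).symm
    have hFoldnf : ¬ FacetIn G U Fold := by
      intro h
      have := h.2 F hF.1 (F.erase_subset v)
      exact hvFold (this ▸ hvF)
    by_cases hFoldL' : Fold ∈ L'
    · -- Case A : replace Fold by F in the list
      refine ⟨L'.map (fun H => if H = Fold then insert v Fold else H), ?_, ?_, ?_⟩
      · exact hnd'.map_on fun H h1 K h2 heq => phi_inj (hvL' H h1) (hvL' K h2) heq
      · intro F'
        constructor
        · intro hF'
          obtain ⟨H, hHL, rfl⟩ := List.mem_map.mp hF'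
          by_cases hH : H = Fold
          · simpa only [if_pos hH, hFoldF] using hF
          · simp only [if_neg hH]
            rcases facet_lift hvF hF hmax ((hmem' H).mp hHL) with h | h
            · exact h
            · exact absurd h hH
        · intro hF'
          by_cases hvF' : v ∈ F'
          · have hFF : F' = F := huniq F' hF' hvF'
            subst hFF
            exact List.mem_map.mpr ⟨Fold, hFoldL', by rw [if_pos rfl, hFoldF]⟩
          · have hH : FacetIn G (U.erase v) F' := facet_drop hF' hvF'
            have hne : F' ≠ Fold := fun h => hFoldnf (h ▸ hF')
            exact List.mem_map.mpr ⟨F', (hmem' F').mpr hH, by simp only [if_neg hne]⟩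
      · intro i h hi
        rw [List.length_map] at h
        simp only [List.getElem_map, ← List.map_take]
        exact isLeafIn_map _ (fun H hH => hvL' H (List.take_subset _ _ hH))
          (hvL' _ (List.getElem_mem h)) (hleaf' i h hi)
    · -- Case B : append F at the end
      have hFoldcl : CliqueIn G (U.erase v) Fold :=
        ⟨Finset.erase_subset_erase v hF.1.1,
          hF.1.2.subset (Finset.coe_subset.mpr (F.erase_subset v))⟩
      obtain ⟨Bb, hBb, hFoldBb⟩ := exists_facet_extend hFoldcl
      have hBbL' : Bb ∈ L' := (hmem' Bb).mpr hBb
      have hFnotL' : F ∉ L' := fun h => hvL' F h hvF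
      refine ⟨L' ++ [F], ?_, ?_, ?_⟩
      · rw [List.nodup_append]
        exact ⟨hnd', List.nodup_singleton _, fun H h1 b h2 heq =>
          hFnotL' (by rw [List.mem_singleton] at h2; subst h2; exact heq ▸ h1)⟩
      · intro F'
        rw [List.mem_append, List.mem_singleton]
        constructor
        · rintro (h | rfl)
          · rcases facet_lift hvF hF hmax ((hmem' F').mp h) with h2 | h2
            · exact h2
            · rw [← hFolddef] at h2
              exact absurd (h2 ▸ h) hFoldL'
          · exact hF
        · intro hfac
          by_cases hvF' : v ∈ F'
          · exact Or.inr (huniq F' hfac hvF')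
          · exact Or.inl ((hmem' F').mpr (facet_drop hfac hvF'))
      · intro i h hi
        rw [List.length_append, List.length_singleton] at h
        by_cases hiL : i < L'.length
        · have e1 : (L' ++ [F])[i]'(by simp; omega) = L'[i] := List.getElem_append_left hiL
          have e2 : (L' ++ [F]).take (i + 1) = L'.take (i + 1) :=
            List.take_append_of_le_length hiL
          rw [e1, e2]
          exact hleaf' i hiL hi
        · have hieq : i = L'.length := by omega
          subst hieq
          have e1 : (L' ++ [F])[L'.length]'(by simp) = F :=
            List.getElem_concat_length rfl _
          have e2 : (L' ++ [F]).take (L'.length + 1) = L' ++ [F] :=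
            List.take_of_length_le (by simp)
          rw [e1, e2]
          refine ⟨Bb, List.mem_append_left _ hBbL', fun h => hvL' Bb hBbL' (h ▸ hvF), ?_⟩
          intro H hH hne'
          have hHL' : H ∈ L' := by
            rcases List.mem_append.mp hH with h2 | h2
            · exact h2
            · exact absurd (List.mem_singleton.mp h2) hne'
          have hvH : v ∉ H := hvL' H hHL'
          intro z hz
          rw [Finset.mem_inter] at hz ⊢
          have hzFold : z ∈ Fold := Finset.mem_erase.mpr ⟨fun hzv => hvH (hzv ▸ hz.1), hz.2⟩
          exact ⟨hFoldBb hzFold, hz.2⟩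


end ChordalQF

/-- The clique complex of a chordal graph is a quasi-forest. -/
theorem cliqueComplex_of_chordal_isQuasiForest {n : ℕ} (G : SimpleGraph (Fin n))
    (hchordal : G.IsChordal) (hiso : ∀ v : Fin n, ∃ w, G.Adj v w) :
    IsQuasiForest {F : Finset (Fin n) | G.IsFacet F} := by
  classical
  obtain ⟨L, h1, h2, h3⟩ := ChordalQF.qf hchordal Finset.univ.card Finset.univ le_rfl
  refine ⟨L, h1, ?_, h3⟩
  intro F
  rw [h2 F, Set.mem_setOf_eq]
  constructor
  · intro h
    exact ⟨h.1.2, fun F' hcl hsub => h.2 F' ⟨Finset.subset_univ _, hcl⟩ hsub⟩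
  · intro h
    exact ⟨⟨Finset.subset_univ _, h.1⟩, fun F' hcl hsub => h.2 F' hcl.2 hsub⟩
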